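/- Let 1 ≤ k ≤ n. The minimum sum-subspace distance of the lifted s-interleaved linearized Reed–Solomon code equals 2·(n − k + 1); that is, the minimum of Σ_(i=1)^ℓ d_S(U^(i)(M), U^(i)(M')) over all pairs of distinct M, M' ∈ F^(s×k) is exactly 2·(n − k + 1). -/

import Mathlib

namespace Stmt16

/-- `genNorm σ a i = σ^(i-1)(a) ⋯ σ(a) · a`, the generalized power function `N_i(a)`. -/
def genNorm {F : Type} [Field F] (σ : F ≃+* F) (a : F) : ℕ → F
  | 0 => 1
  | i + 1 => (⇑σ)^[i] a * genNorm σ a i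

/-- Generalized operator `D_a^i(b) = σ^i(b) · N_i(a)` for `i ∈ ℕ`. -/
def opev {F : Type} [Field F] (σ : F ≃+* F) (a b : F) (i : ℕ) : F :=
  (⇑σ)^[i] b * genNorm σ a i

/-- `b` is σ-conjugate to `a`, i.e. `b = σ(c)·a·c⁻¹` for some nonzero `c`. -/
def SConj {F : Type} [Field F] (σ : F ≃+* F) (a b : F) : Prop :=
  ∃ c : F, c ≠ 0 ∧ b = σ c * a * c⁻¹

/-- σ-generalized Moore matrix `λ_d(x)_a⃗` w.r.t. the length partition `nn`:
its row `r` applies `D_{a_i}^r` entrywise to the `i`-th block of `x`. -/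
def moore {F : Type} [Field F] (σ : F ≃+* F) {ℓ : ℕ} (nn : Fin ℓ → ℕ) (aa : Fin ℓ → F)
    (d : ℕ) (x : (Σ i : Fin ℓ, Fin (nn i)) → F) :
    Matrix (Fin d) (Σ i : Fin ℓ, Fin (nn i)) F :=
  Matrix.of fun r p => opev σ (aa p.1) (x p) (r : ℕ)

/-- `λ_d(X)_a⃗` for a matrix `X`: the stack of `λ_d(x_j)_a⃗` over the rows of `X`. -/
def mooreMat {F : Type} [Field F] (σ : F ≃+* F) {ℓ : ℕ} (nn : Fin ℓ → ℕ) (aa : Fin ℓ → F)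
    {s : ℕ} (d : ℕ) (X : Matrix (Fin s) (Σ i : Fin ℓ, Fin (nn i)) F) :
    Matrix (Fin s × Fin d) (Σ i : Fin ℓ, Fin (nn i)) F :=
  Matrix.of fun r p => opev σ (aa p.1) (X r.1 p) (r.2 : ℕ)

/-- `rk_q` of a vector: the `K`-dimension of the `K`-span of its entries. -/
noncomputable def rkq (K : Type) [Field K] {F : Type} [Field F] [Algebra K F] {ι : Type}
    (v : ι → F) : ℕ :=
  Module.finrank K (Submodule.span K (Set.range v))

/-- `rk_q` of a matrix: the `K`-dimension of the `K`-span of its columns. -/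
noncomputable def rkqMat (K : Type) [Field K] {F : Type} [Field F] [Algebra K F]
    {s : ℕ} {ι : Type} (X : Matrix (Fin s) ι F) : ℕ :=
  Module.finrank K (Submodule.span K (Set.range fun j : ι => fun r : Fin s => X r j))

/-- Sum-rank weight of a blockwise vector. -/
noncomputable def wtV (K : Type) [Field K] {F : Type} [Field F] [Algebra K F] {ℓ : ℕ}
    (nn : Fin ℓ → ℕ) (x : (Σ i : Fin ℓ, Fin (nn i)) → F) : ℕ :=
  ∑ i, rkq K fun μ : Fin (nn i) => x ⟨i, μ⟩

/-- Sum-rank weight of a blockwise matrix. -/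
noncomputable def wtM (K : Type) [Field K] {F : Type} [Field F] [Algebra K F] {s ℓ : ℕ}
    (nn : Fin ℓ → ℕ) (X : Matrix (Fin s) (Σ i : Fin ℓ, Fin (nn i)) F) : ℕ :=
  ∑ i, rkqMat K (Matrix.of fun (r : Fin s) (μ : Fin (nn i)) => X r ⟨i, μ⟩)

/-- Codeword `C(M) = M · λ_k(β)_a⃗` of the `s`-interleaved linearized Reed–Solomon code. -/
def codeword {F : Type} [Field F] (σ : F ≃+* F) {ℓ : ℕ} (nn : Fin ℓ → ℕ) (aa : Fin ℓ → F)
    (β : (Σ i : Fin ℓ, Fin (nn i)) → F) {s : ℕ} (k : ℕ) (M : Matrix (Fin s) (Fin k) F) :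
    Matrix (Fin s) (Σ i : Fin ℓ, Fin (nn i)) F :=
  M * moore σ nn aa k β

/-- The `i`-th component subspace of the lifted codeword of `M`: the `K`-span in
`F^{s+1}` of the `n_i` vectors `(β^(i)_μ, C(M)^(i)_{1,μ}, …, C(M)^(i)_{s,μ})`. -/
noncomputable def liftSp (K : Type) [Field K] {F : Type} [Field F] [Algebra K F]
    (σ : F ≃+* F) {ℓ : ℕ} (nn : Fin ℓ → ℕ) (aa : Fin ℓ → F)
    (β : (Σ i : Fin ℓ, Fin (nn i)) → F) {s : ℕ} (k : ℕ)
    (M : Matrix (Fin s) (Fin k) F) (i : Fin ℓ) : Submodule K (Fin (s + 1) → F) :=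
  Submodule.span K (Set.range fun μ : Fin (nn i) =>
    Fin.cons (β ⟨i, μ⟩) fun j : Fin s => codeword σ nn aa β k M j ⟨i, μ⟩)

section Basic
variable {F : Type} [Field F] (σ : F ≃+* F)

lemma iter_mul (m : ℕ) (x y : F) : (⇑σ)^[m] (x * y) = (⇑σ)^[m] x * (⇑σ)^[m] y := by
  induction m with
  | zero => simp
  | succ m ih => simp [Function.iterate_succ_apply', ih, map_mul]

lemma iter_add (m : ℕ) (x y : F) : (⇑σ)^[m] (x + y) = (⇑σ)^[m] x + (⇑σ)^[m] y := by
  induction m with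
  | zero => simp
  | succ m ih => simp [Function.iterate_succ_apply', ih, map_add]

lemma iter_inv (m : ℕ) (x : F) : (⇑σ)^[m] x⁻¹ = ((⇑σ)^[m] x)⁻¹ := by
  induction m with
  | zero => simp
  | succ m ih => simp [Function.iterate_succ_apply', ih, map_inv₀]

lemma iter_ne_zero (m : ℕ) {x : F} (hx : x ≠ 0) : (⇑σ)^[m] x ≠ 0 := by
  induction m with
  | zero => simpa
  | succ m ih => rw [Function.iterate_succ_apply']; exact fun h => ih (by simpa using h)

lemma opev_eq_iterate (a b : F) (i : ℕ) :
    opev σ a b i = (fun b => σ b * a)^[i] b := by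
  induction i generalizing b with
  | zero => simp [opev, genNorm]
  | succ i ih =>
      rw [Function.iterate_succ_apply, ← ih (σ b * a)]
      simp only [opev, genNorm, iter_mul, ← Function.iterate_succ_apply (⇑σ) i b, Nat.add_comm 1 i]
      ring

lemma opev_succ (a b : F) (i : ℕ) : opev σ a b (i+1) = opev σ a (σ b * a) i := by
  rw [opev_eq_iterate, opev_eq_iterate, Function.iterate_succ_apply]

lemma opev_add (a b b' : F) (i : ℕ) :
    opev σ a (b + b') i = opev σ a b i + opev σ a b' i := by
  simp [opev, iter_add, add_mul]

lemma opev_mul_left (a c b : F) (m : ℕ) :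
    opev σ a (c * b) m = (⇑σ)^[m] c * opev σ a b m := by
  simp only [opev, iter_mul]; ring

lemma opev_smul {K : Type} [Field K] [Algebra K F]
    (hfix : ∀ x : F, σ x = x ↔ x ∈ Set.range (algebraMap K F))
    (a b : F) (t : K) (m : ℕ) : opev σ a (t • b) m = t • opev σ a b m := by
  have h1 : σ (algebraMap K F t) = algebraMap K F t := (hfix _).2 ⟨t, rfl⟩
  have h : (⇑σ)^[m] (algebraMap K F t) = algebraMap K F t := by
    induction m with
    | zero => rfl
    | succ m ih => rw [Function.iterate_succ_apply', ih, h1]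
  rw [Algebra.smul_def, opev_mul_left, h, Algebra.smul_def]

lemma genNorm_eq_prod (a : F) (i : ℕ) :
    genNorm σ a i = ∏ u ∈ Finset.range i, (⇑σ)^[u] a := by
  induction i with
  | zero => rfl
  | succ i ih => rw [genNorm, ih, Finset.prod_range_succ]; ring

lemma opev_conj (a b : F) (hb : b ≠ 0) (j : ℕ) :
    opev σ a b j = genNorm σ (σ b * a * b⁻¹) j * b := by
  induction j with
  | zero => simp [opev, genNorm]
  | succ j ih =>
      have hbj : (⇑σ)^[j] b ≠ 0 := iter_ne_zero σ j hb
      rw [genNorm, mul_assoc, ← ih]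
      simp only [opev, genNorm, iter_mul, iter_inv,
        ← Function.iterate_succ_apply (⇑σ) j b, Nat.add_comm 1 j]
      field_simp

lemma iter_neg (m : ℕ) (x : F) : (⇑σ)^[m] (-x) = -(⇑σ)^[m] x := by
  induction m with
  | zero => simp
  | succ m ih => simp [Function.iterate_succ_apply', ih, map_neg]

lemma opev_sub (a b b' : F) (i : ℕ) :
    opev σ a (b - b') i = opev σ a b i - opev σ a b' i := by
  rw [sub_eq_add_neg, opev_add]
  simp only [opev, iter_neg, neg_mul]
  ring

end Basic
section Lin
variable (K : Type) [Field K] {F : Type} [Field F] [Algebra K F]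
variable (σ : F ≃+* F)
variable (hfix : ∀ x : F, σ x = x ↔ x ∈ Set.range (algebraMap K F))

/-- The `K`-linear map `b ↦ σ(b)·a`. -/
def Dmap (a : F) : F →ₗ[K] F where
  toFun b := σ b * a
  map_add' x y := by simp [map_add, add_mul]
  map_smul' t x := by
    have h1 : σ (algebraMap K F t) = algebraMap K F t := (hfix _).2 ⟨t, rfl⟩
    simp only [RingHom.id_apply, Algebra.smul_def, map_mul, h1, mul_assoc]

lemma Dmap_pow_apply (a b : F) (m : ℕ) :
    ((Dmap K σ hfix a) ^ m) b = opev σ a b m := by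
  rw [Module.End.pow_apply, opev_eq_iterate]
  induction m generalizing b with
  | zero => rfl
  | succ m ih =>
      rw [Function.iterate_succ_apply, Function.iterate_succ_apply, ← ih]
      rfl

lemma Dmap_apply (a b : F) : Dmap K σ hfix a b = σ b * a := rfl

lemma DL_apply (a c b : F) :
    (Dmap K σ hfix a - LinearMap.mulLeft K c) b = σ b * a - c * b := rfl

/-- The `K`-linear operator `b ↦ ∑_{j<N} e j · D_a^j(b)`. -/
noncomputable def Fop (e : ℕ → F) (N : ℕ) (a : F) : F →ₗ[K] F :=
  ∑ j ∈ Finset.range N, (LinearMap.mulLeft K (e j)) ∘ₗ ((Dmap K σ hfix a) ^ j)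

lemma Fop_apply (e : ℕ → F) (N : ℕ) (a b : F) :
    Fop K σ hfix e N a b = ∑ j ∈ Finset.range N, e j * opev σ a b j := by
  simp [Fop, LinearMap.sum_apply, Dmap_pow_apply]

lemma Fop_congr (e : ℕ → F) {k N : ℕ} (hvan : ∀ t, k ≤ t → e t = 0) (h : k ≤ N) (a : F) :
    Fop K σ hfix e N a = Fop K σ hfix e k a := by
  ext b
  rw [Fop_apply, Fop_apply]
  exact (Finset.sum_subset (Finset.range_subset_range.2 h) (fun t _ ht => by
    rw [hvan t (by simpa using ht)]; ring)).symm

/-- Quotient coefficients of `e` upon division by `(x - c)`. -/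
def gq (σ : F ≃+* F) (e : ℕ → F) (N : ℕ) (c : F) (m : ℕ) : F :=
  ∑ t ∈ Finset.Ico (m+1) N, e t * ∏ u ∈ Finset.Ico (m+1) t, (⇑σ)^[u] c

omit [Algebra K F] in
lemma gq_zero {N m : ℕ} (e : ℕ → F) (c : F) (h : N ≤ m + 1) : gq σ e N c m = 0 := by
  simp [gq, Finset.Ico_eq_empty (by omega : ¬ (m+1) < N)]

omit [Algebra K F] in
lemma gq_rec {N : ℕ} (e : ℕ → F) (hvan : ∀ t, N ≤ t → e t = 0) (c : F) (m : ℕ) :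
    gq σ e N c m = e (m+1) + gq σ e N c (m+1) * (⇑σ)^[m+1] c := by
  by_cases h : m + 1 < N
  · rw [gq, Finset.sum_eq_sum_Ico_succ_bot h]
    congr 1
    · simp [Finset.Ico_self]
    · rw [gq, Finset.sum_mul]
      apply Finset.sum_congr rfl
      intro t ht
      have h2 : m + 1 < t := by
        simp only [Finset.mem_Ico] at ht; omega
      rw [Finset.prod_eq_prod_Ico_succ_bot h2]
      ring
  · rw [gq_zero σ e c (by omega), hvan (m+1) (by omega), gq_zero σ e c (by omega)]
    ring

omit [Algebra K F] in
lemma gq_base {N : ℕ} (e : ℕ → F) (hvan : ∀ t, N ≤ t → e t = 0) (c : F) :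
    e 0 + gq σ e N c 0 * c = ∑ t ∈ Finset.range N, e t * genNorm σ c t := by
  rcases Nat.eq_zero_or_pos N with h | h
  · subst h; simp [hvan 0 le_rfl, gq_zero (N := 0) (m := 0) σ e c (by omega)]
  · rw [Finset.range_eq_Ico, Finset.sum_eq_sum_Ico_succ_bot h]
    have : ∑ t ∈ Finset.Ico 1 N, e t * genNorm σ c t = gq σ e N c 0 * c := by
      rw [gq, Finset.sum_mul]
      apply Finset.sum_congr rfl
      intro t ht
      have h2 : 0 < t := by simp only [Finset.mem_Ico] at ht; omega
      rw [genNorm_eq_prod, Finset.range_eq_Ico, Finset.prod_eq_prod_Ico_succ_bot h2]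
      simp only [Function.iterate_zero, id_eq]
      ring
    rw [this]
    simp [genNorm]

omit [Algebra K F] in
lemma gq_ne_zero {N : ℕ} (e : ℕ → F) (hvan : ∀ t, N ≤ t → e t = 0) (hne : e ≠ 0) (c : F)
    (hr : ∑ t ∈ Finset.range N, e t * genNorm σ c t = 0) :
    (fun m => gq σ e N c m) ≠ (0 : ℕ → F) := by
  intro h0
  apply hne
  have hz : ∀ m, gq σ e N c m = 0 := fun m => congrFun h0 m
  funext t
  cases t with
  | zero =>
      have := gq_base σ e hvan c
      rw [hz 0, hr] at this
      simpa using this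
  | succ m =>
      have := gq_rec σ e hvan c m
      rw [hz m, hz (m+1)] at this
      simp only [Pi.zero_apply]
      linear_combination -this

omit [Algebra K F] in
lemma div_aux (N : ℕ) (e : ℕ → F) (hvan : ∀ t, N ≤ t → e t = 0) (c : F) (x : ℕ → F) :
    ∑ j ∈ Finset.range N, e j * x j
      = (∑ m ∈ Finset.range N, gq σ e N c m * (x (m+1) - (⇑σ)^[m] c * x m))
        + (∑ t ∈ Finset.range N, e t * genNorm σ c t) * x 0 := by
  set g : ℕ → F := fun m => gq σ e N c m with hg
  have expand : ∑ m ∈ Finset.range N, g m * (x (m+1) - (⇑σ)^[m] c * x m)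
      = (∑ m ∈ Finset.range N, g m * x (m+1))
        - ∑ m ∈ Finset.range N, g m * (⇑σ)^[m] c * x m := by
    rw [← Finset.sum_sub_distrib]
    apply Finset.sum_congr rfl
    intro m _
    ring
  have hgrec : ∑ m ∈ Finset.range N, g m * x (m+1)
      = (∑ m ∈ Finset.range N, e (m+1) * x (m+1))
        + ∑ m ∈ Finset.range N, g (m+1) * (⇑σ)^[m+1] c * x (m+1) := by
    rw [← Finset.sum_add_distrib]
    apply Finset.sum_congr rfl
    intro m _
    rw [hg]
    simp only
    rw [gq_rec σ e hvan c m]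
    ring
  have hA : ∑ m ∈ Finset.range N, e (m+1) * x (m+1)
      = (∑ j ∈ Finset.range N, e j * x j) - e 0 * x 0 := by
    have h1 := Finset.sum_range_succ' (fun j => e j * x j) N
    have h2 := Finset.sum_range_succ (fun j => e j * x j) N
    rw [hvan N le_rfl] at h2
    rw [h2] at h1
    linear_combination -h1
  have hB : ∑ m ∈ Finset.range N, g (m+1) * (⇑σ)^[m+1] c * x (m+1)
      = (∑ j ∈ Finset.range N, g j * (⇑σ)^[j] c * x j) - g 0 * (⇑σ)^[0] c * x 0 := by
    have h1 := Finset.sum_range_succ' (fun j => g j * (⇑σ)^[j] c * x j) N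
    have h2 := Finset.sum_range_succ (fun j => g j * (⇑σ)^[j] c * x j) N
    have : g N = 0 := gq_zero σ e c (by omega)
    rw [this] at h2
    rw [h2] at h1
    linear_combination -h1
  have gbase : e 0 + g 0 * c = ∑ t ∈ Finset.range N, e t * genNorm σ c t :=
    gq_base σ e hvan c
  rw [show (∑ m ∈ Finset.range N, gq σ e N c m * (x (m+1) - (⇑σ)^[m] c * x m))
      = ∑ m ∈ Finset.range N, g m * (x (m+1) - (⇑σ)^[m] c * x m) from rfl]
  rw [expand, hgrec, hA, hB, ← gbase]
  simp only [Function.iterate_zero, id_eq]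
  ring
end Lin
section Rank
open Module LinearMap Submodule

variable {K : Type} [Field K] {F : Type} [Field F] [Algebra K F] [Finite F]

lemma finrank_comap_subtype_le (p W : Submodule K F) :
    finrank K ↥(W.comap p.subtype) ≤ finrank K ↥W := by
  rw [(Submodule.equivMapOfInjective p.subtype (Submodule.injective_subtype p)
    (W.comap p.subtype)).finrank_eq]
  exact Submodule.finrank_mono (Submodule.map_comap_le _ _)

lemma finrank_ker_comp (φ ψ : F →ₗ[K] F) :
    finrank K ↥(LinearMap.ker (ψ ∘ₗ φ))
      ≤ finrank K ↥(LinearMap.ker ψ) + finrank K ↥(LinearMap.ker φ) := by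
  set p := LinearMap.ker (ψ ∘ₗ φ)
  have h1 : finrank K ↥(LinearMap.range (φ.domRestrict p))
      + finrank K ↥(LinearMap.ker (φ.domRestrict p)) = finrank K ↥p :=
    LinearMap.finrank_range_add_finrank_ker _
  have h2 : LinearMap.range (φ.domRestrict p) ≤ LinearMap.ker ψ := by
    rw [LinearMap.range_domRestrict]
    rw [Submodule.map_le_iff_le_comap]
    intro x hx
    simpa [p, LinearMap.mem_ker] using hx
  have h3 : finrank K ↥(LinearMap.ker (φ.domRestrict p)) ≤ finrank K ↥(LinearMap.ker φ) := by
    rw [LinearMap.ker_domRestrict]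
    exact finrank_comap_subtype_le _ _
  have h4 := Submodule.finrank_mono h2
  omega

lemma finrank_map_add_finrank_inf_ker (φ : F →ₗ[K] F) (V : Submodule K F) :
    finrank K ↥(V.map φ) + finrank K ↥(LinearMap.ker φ ⊓ V) = finrank K ↥V := by
  have h1 : finrank K ↥(LinearMap.range (φ.domRestrict V))
      + finrank K ↥(LinearMap.ker (φ.domRestrict V)) = finrank K ↥V :=
    LinearMap.finrank_range_add_finrank_ker _
  rw [LinearMap.range_domRestrict] at h1
  rw [LinearMap.ker_domRestrict] at h1
  rw [(Submodule.equivMapOfInjective V.subtype (Submodule.injective_subtype V)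
    ((LinearMap.ker φ).comap V.subtype)).finrank_eq, Submodule.map_comap_subtype] at h1
  rw [inf_comm]
  exact h1

end Rank

section Conj
variable {F : Type} [Field F] (σ : F ≃+* F)

lemma sconj_symm {a b : F} (h : SConj σ a b) : SConj σ b a := by
  obtain ⟨c, hc, rfl⟩ := h
  refine ⟨c⁻¹, inv_ne_zero hc, ?_⟩
  rw [map_inv₀]
  have hsc : σ c ≠ 0 := fun h => hc (by simpa using congrArg σ.symm h)
  field_simp

lemma sconj_trans {a b c : F} (h1 : SConj σ a b) (h2 : SConj σ b c) : SConj σ a c := by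
  obtain ⟨u, hu, rfl⟩ := h1
  obtain ⟨v, hv, rfl⟩ := h2
  refine ⟨v * u, mul_ne_zero hv hu, ?_⟩
  rw [map_mul, mul_inv]
  ring

end Conj
section LL
open Module LinearMap Submodule Finset

variable {K : Type} [Field K] {F : Type} [Field F] [Algebra K F] [Finite F]
variable (σ : F ≃+* F)
variable (hfix : ∀ x : F, σ x = x ↔ x ∈ Set.range (algebraMap K F))

lemma mem_kerDL (a c b : F) :
    b ∈ LinearMap.ker (Dmap K σ hfix a - LinearMap.mulLeft K c) ↔ σ b * a = c * b := by
  rw [LinearMap.mem_ker, DL_apply, sub_eq_zero]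

lemma kerDL_sconj {a c : F} (h : LinearMap.ker (Dmap K σ hfix a - LinearMap.mulLeft K c) ≠ ⊥) :
    SConj σ a c := by
  obtain ⟨b, hbmem, hbne⟩ := (Submodule.ne_bot_iff _).1 h
  have hb : σ b * a = c * b := (mem_kerDL σ hfix a c b).1 hbmem
  refine ⟨b, hbne, ?_⟩
  rw [hb]
  field_simp

lemma finrank_kerDL_le_one (a c : F) (ha : a ≠ 0) :
    finrank K ↥(LinearMap.ker (Dmap K σ hfix a - LinearMap.mulLeft K c)) ≤ 1 := by
  by_cases hbot : LinearMap.ker (Dmap K σ hfix a - LinearMap.mulLeft K c) = ⊥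
  · rw [hbot, finrank_bot]; omega
  · obtain ⟨b, hbmem, hbne⟩ := (Submodule.ne_bot_iff _).1 hbot
    have hb : σ b * a = c * b := (mem_kerDL σ hfix a c b).1 hbmem
    have hsb : σ b ≠ 0 := fun h => hbne (by simpa using congrArg σ.symm h)
    have hc : c ≠ 0 := by
      intro h
      rw [h, zero_mul] at hb
      exact mul_ne_zero hsb ha hb
    have hle : LinearMap.ker (Dmap K σ hfix a - LinearMap.mulLeft K c) ≤ K ∙ b := by
      intro b' hb'
      by_cases hb0 : b' = 0
      · simp [hb0]
      · have hbe : σ b' * a = c * b' := (mem_kerDL σ hfix a c b').1 hb'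
        have h1 : σ b' = c * b' / a := by rw [eq_div_iff ha]; exact hbe
        have h2 : σ b = c * b / a := by rw [eq_div_iff ha]; exact hb
        have ht : σ (b' * b⁻¹) = b' * b⁻¹ := by
          rw [map_mul, map_inv₀, h1, h2]
          field_simp
        obtain ⟨t, ht'⟩ := (hfix _).1 ht
        have hb'' : b' = t • b := by
          rw [Algebra.smul_def, ht']
          field_simp
        rw [hb'']
        exact Submodule.smul_mem _ _ (Submodule.mem_span_singleton_self b)
    calc finrank K ↥(LinearMap.ker (Dmap K σ hfix a - LinearMap.mulLeft K c))
        ≤ finrank K ↥(K ∙ b) := Submodule.finrank_mono hle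
      _ = 1 := finrank_span_singleton hbne

lemma lam_leroy {ℓ : ℕ} (aa : Fin ℓ → F) (ha0 : ∀ i, aa i ≠ 0)
    (haconj : ∀ i j : Fin ℓ, i ≠ j → ¬ SConj σ (aa i) (aa j)) :
    ∀ (k : ℕ) (e : ℕ → F), (∀ t, k ≤ t → e t = 0) → e ≠ 0 →
      ∑ i, finrank K ↥(LinearMap.ker (Fop K σ hfix e k (aa i))) ≤ k - 1 := by
  intro k
  induction k with
  | zero => exact fun e hvan hne => absurd (funext fun t => hvan t (Nat.zero_le t)) hne
  | succ k ih =>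
    intro e hvan hne
    by_cases hK : ∀ i, LinearMap.ker (Fop K σ hfix e (k+1) (aa i)) = ⊥
    · have h0 : ∑ i, finrank K ↥(LinearMap.ker (Fop K σ hfix e (k+1) (aa i))) = 0 :=
        Finset.sum_eq_zero fun i _ => by rw [hK i, finrank_bot]
      omega
    · push_neg at hK
      obtain ⟨i₀, hi₀⟩ := hK
      obtain ⟨b, hbmem, hbne⟩ := (Submodule.ne_bot_iff _).1 hi₀
      set c := σ b * aa i₀ * b⁻¹ with hc
      have hr : ∑ t ∈ Finset.range (k+1), e t * genNorm σ c t = 0 := by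
        have h1 : Fop K σ hfix e (k+1) (aa i₀) b = 0 := LinearMap.mem_ker.1 hbmem
        rw [Fop_apply] at h1
        have h3 : (∑ j ∈ Finset.range (k+1), e j * genNorm σ c j) * b = 0 := by
          rw [Finset.sum_mul, ← h1]
          apply Finset.sum_congr rfl
          intro j _
          rw [opev_conj σ _ b hbne j]
          ring
        exact (mul_eq_zero.1 h3).resolve_right hbne
      have hgvan : ∀ m, k ≤ m → gq σ e (k+1) c m = 0 :=
        fun m hm => gq_zero σ e c (by omega)
      have hgne : (fun m => gq σ e (k+1) c m) ≠ (0 : ℕ → F) :=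
        gq_ne_zero σ e hvan hne c hr
      rcases Nat.eq_zero_or_pos k with hk0 | hkpos
      · exact absurd (funext fun m => hgvan m (by omega)) hgne
      have hfact : ∀ a', Fop K σ hfix e (k+1) a'
          = (Fop K σ hfix (fun m => gq σ e (k+1) c m) k a') ∘ₗ
              (Dmap K σ hfix a' - LinearMap.mulLeft K c) := by
        intro a'
        rw [← Fop_congr K σ hfix (fun m => gq σ e (k+1) c m) hgvan (Nat.le_succ k) a']
        ext b'
        rw [LinearMap.comp_apply, Fop_apply, Fop_apply, DL_apply]
        have hx := div_aux σ (k+1) e hvan c (fun j => opev σ a' b' j)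
        rw [hr] at hx
        simp only [zero_mul, add_zero] at hx
        rw [hx]
        apply Finset.sum_congr rfl
        intro m _
        congr 1
        rw [opev_sub σ a' (σ b' * a') (c * b') m, ← opev_succ, opev_mul_left]
      have key : ∀ i, finrank K ↥(LinearMap.ker (Fop K σ hfix e (k+1) (aa i)))
          ≤ finrank K ↥(LinearMap.ker (Fop K σ hfix (fun m => gq σ e (k+1) c m) k (aa i)))
            + finrank K ↥(LinearMap.ker (Dmap K σ hfix (aa i) - LinearMap.mulLeft K c)) := by
        intro i
        rw [hfact (aa i)]
        exact finrank_ker_comp _ _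
      have hIH := ih (fun m => gq σ e (k+1) c m) hgvan hgne
      have hconj0 : SConj σ (aa i₀) c := ⟨b, hbne, hc⟩
      have hzero : ∀ i, i ≠ i₀ →
          finrank K ↥(LinearMap.ker (Dmap K σ hfix (aa i) - LinearMap.mulLeft K c)) = 0 := by
        intro i hi
        have hbot : LinearMap.ker (Dmap K σ hfix (aa i) - LinearMap.mulLeft K c) = ⊥ := by
          by_contra hne'
          exact haconj i₀ i (Ne.symm hi)
            (sconj_trans σ hconj0 (sconj_symm σ (kerDL_sconj σ hfix hne')))
        rw [hbot, finrank_bot]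
      have hB : ∑ i, finrank K ↥(LinearMap.ker (Dmap K σ hfix (aa i) - LinearMap.mulLeft K c))
          ≤ 1 := by
        rw [Finset.sum_eq_single i₀ (fun i _ hi => hzero i hi)
          (fun h => absurd (Finset.mem_univ i₀) h)]
        exact finrank_kerDL_le_one σ hfix (aa i₀) c (ha0 i₀)
      calc ∑ i, finrank K ↥(LinearMap.ker (Fop K σ hfix e (k+1) (aa i)))
          ≤ ∑ i, (finrank K ↥(LinearMap.ker (Fop K σ hfix (fun m => gq σ e (k+1) c m) k (aa i)))
            + finrank K ↥(LinearMap.ker (Dmap K σ hfix (aa i) - LinearMap.mulLeft K c))) :=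
            Finset.sum_le_sum fun i _ => key i
        _ = (∑ i, finrank K ↥(LinearMap.ker (Fop K σ hfix (fun m => gq σ e (k+1) c m) k (aa i))))
            + ∑ i, finrank K ↥(LinearMap.ker (Dmap K σ hfix (aa i) - LinearMap.mulLeft K c)) :=
            Finset.sum_add_distrib
        _ ≤ (k - 1) + 1 := add_le_add hIH hB
        _ ≤ (k + 1) - 1 := by omega

end LL

section Geom
open Module LinearMap Submodule Set

variable (K : Type) [Field K] {F : Type} [Field F] [Algebra K F] [Finite F]
variable (σ : F ≃+* F)
variable {ℓ : ℕ} (nn : Fin ℓ → ℕ) (aa : Fin ℓ → F)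
variable (β : (Σ i : Fin ℓ, Fin (nn i)) → F) {s : ℕ} (k : ℕ)

/-- Generators of the lifted subspace. -/
def gens (M : Matrix (Fin s) (Fin k) F) (i : Fin ℓ) : Fin (nn i) → (Fin (s+1) → F) :=
  fun μ => Fin.cons (β ⟨i, μ⟩) fun j : Fin s => codeword σ nn aa β k M j ⟨i, μ⟩

/-- Column vectors of the codeword, block `i`. -/
def colv (E : Matrix (Fin s) (Fin k) F) (i : Fin ℓ) : Fin (nn i) → (Fin s → F) :=
  fun μ r => codeword σ nn aa β k E r ⟨i, μ⟩

/-- Block rank of a codeword. -/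
noncomputable def rho (E : Matrix (Fin s) (Fin k) F) (i : Fin ℓ) : ℕ :=
  finrank K ↥(span K (Set.range (colv σ nn aa β k E i)))

lemma liftSp_eq (M : Matrix (Fin s) (Fin k) F) (i : Fin ℓ) :
    liftSp K σ nn aa β k M i = span K (Set.range (gens σ nn aa β k M i)) := rfl

lemma codeword_apply (M : Matrix (Fin s) (Fin k) F) (r : Fin s) (p : Σ i : Fin ℓ, Fin (nn i)) :
    codeword σ nn aa β k M r p = ∑ t : Fin k, M r t * opev σ (aa p.1) (β p) (t : ℕ) := by
  simp [codeword, moore, Matrix.mul_apply]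

lemma codeword_sub (M M' : Matrix (Fin s) (Fin k) F) (r : Fin s) (p : Σ i : Fin ℓ, Fin (nn i)) :
    codeword σ nn aa β k (M - M') r p = codeword σ nn aa β k M r p - codeword σ nn aa β k M' r p := by
  simp [codeword, Matrix.sub_mul]

lemma gens_linIndep (hβ : ∀ i, LinearIndependent K fun μ : Fin (nn i) => β ⟨i, μ⟩)
    (M : Matrix (Fin s) (Fin k) F) (i : Fin ℓ) :
    LinearIndependent K (gens σ nn aa β k M i) := by
  apply LinearIndependent.of_comp (LinearMap.proj (R := K) (φ := fun _ : Fin (s+1) => F) 0)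
  have h : (⇑(LinearMap.proj (R := K) (φ := fun _ : Fin (s+1) => F) 0)
      ∘ gens σ nn aa β k M i) = fun μ => β ⟨i, μ⟩ := by
    funext μ
    simp [gens]
  rw [h]
  exact hβ i

lemma finrank_liftSp (hβ : ∀ i, LinearIndependent K fun μ : Fin (nn i) => β ⟨i, μ⟩)
    (M : Matrix (Fin s) (Fin k) F) (i : Fin ℓ) :
    finrank K ↥(liftSp K σ nn aa β k M i) = nn i := by
  rw [liftSp_eq, finrank_span_eq_card (gens_linIndep K σ nn aa β k hβ M i)]
  simp

/-- `Fin.cons 0` as a linear map. -/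
def consZero : (Fin s → F) →ₗ[K] (Fin (s+1) → F) where
  toFun w := Fin.cons 0 w
  map_add' x y := by
    funext r
    refine Fin.cases ?_ (fun j => ?_) r <;> simp
  map_smul' t x := by
    funext r
    refine Fin.cases ?_ (fun j => ?_) r <;> simp

lemma consZero_inj : Function.Injective (consZero K (F := F) (s := s)) := by
  intro x y h
  funext r
  have := congrFun h r.succ
  simpa [consZero] using this

lemma block_dist (hβ : ∀ i, LinearIndependent K fun μ : Fin (nn i) => β ⟨i, μ⟩)
    (M M' : Matrix (Fin s) (Fin k) F) (i : Fin ℓ) :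
    finrank K ↥(liftSp K σ nn aa β k M i ⊔ liftSp K σ nn aa β k M' i)
      - finrank K ↥(liftSp K σ nn aa β k M i ⊓ liftSp K σ nn aa β k M' i)
      = 2 * rho K σ nn aa β k (M - M') i := by
  set U := liftSp K σ nn aa β k M i
  set U' := liftSp K σ nn aa β k M' i
  set Z : Submodule K (Fin (s+1) → F) :=
    Submodule.map (consZero K) (span K (Set.range (colv σ nn aa β k (M - M') i))) with hZdef
  have hgen_sub : ∀ μ, (consZero K) (colv σ nn aa β k (M - M') i μ)
      = gens σ nn aa β k M i μ - gens σ nn aa β k M' i μ := by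
    intro μ
    funext r
    refine Fin.cases ?_ (fun j => ?_) r
    · simp [consZero, gens]
    · simp [consZero, gens, colv, codeword_sub]
  have hZle : Z ≤ U ⊔ U' := by
    rw [hZdef, Submodule.map_span, ← Set.range_comp]
    rw [span_le]
    rintro _ ⟨μ, rfl⟩
    simp only [Function.comp_apply, hgen_sub μ]
    exact sub_mem (Submodule.mem_sup_left (subset_span ⟨μ, rfl⟩))
      (Submodule.mem_sup_right (subset_span ⟨μ, rfl⟩))
  have hU'le : U' ≤ U ⊔ Z := by
    rw [show U' = span K (Set.range (gens σ nn aa β k M' i)) from rfl, span_le]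
    rintro _ ⟨μ, rfl⟩
    have h1 : gens σ nn aa β k M' i μ
        = gens σ nn aa β k M i μ - (consZero K) (colv σ nn aa β k (M - M') i μ) := by
      rw [hgen_sub μ]; ring
    rw [h1]
    refine sub_mem (Submodule.mem_sup_left (subset_span ⟨μ, rfl⟩))
      (Submodule.mem_sup_right ?_)
    exact Submodule.mem_map_of_mem (subset_span ⟨μ, rfl⟩)
  have hsup : U ⊔ U' = U ⊔ Z := by
    apply le_antisymm
    · exact sup_le le_sup_left hU'le
    · refine sup_le le_sup_left hZle
  have hinf0 : U ⊓ Z = ⊥ := by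
    rw [eq_bot_iff]
    rintro x hx
    have hxU : x ∈ U := hx.1
    have hxZ : x ∈ Z := hx.2
    have hx0 : x 0 = 0 := by
      have hZk : Z ≤ LinearMap.ker (LinearMap.proj (R := K) (φ := fun _ : Fin (s+1) => F) 0) := by
        rw [hZdef, Submodule.map_span, span_le]
        rintro _ ⟨_, ⟨μ, rfl⟩, rfl⟩
        simp [consZero, LinearMap.mem_ker]
      exact hZk hxZ
    obtain ⟨cf, hcf⟩ := (mem_span_range_iff_exists_fun (R := K)).1 hxU
    have h0 : ∑ μ, cf μ • β ⟨i, μ⟩ = 0 := by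
      have := congrFun (congrArg (fun v : Fin (s+1) → F => v) hcf) 0
      rw [← hx0]
      rw [← hcf]
      rw [Finset.sum_apply]
      apply Finset.sum_congr rfl
      intro μ _
      simp [gens]
    have hcf0 : ∀ μ, cf μ = 0 := Fintype.linearIndependent_iff.1 (hβ i) cf h0
    have : x = 0 := by
      rw [← hcf]
      apply Finset.sum_eq_zero
      intro μ _
      rw [hcf0 μ, zero_smul]
    simp [this]
  have e1 : finrank K ↥(U ⊔ U') + finrank K ↥(U ⊓ U')
      = finrank K ↥U + finrank K ↥U' := Submodule.finrank_sup_add_finrank_inf_eq U U'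
  have e2 : finrank K ↥(U ⊔ Z) + finrank K ↥(U ⊓ Z)
      = finrank K ↥U + finrank K ↥Z := Submodule.finrank_sup_add_finrank_inf_eq U Z
  have e3 : finrank K ↥Z = rho K σ nn aa β k (M - M') i := by
    rw [hZdef, rho]
    exact (Submodule.equivMapOfInjective _ (consZero_inj K) _).finrank_eq.symm
  have e4 : finrank K ↥U = nn i := finrank_liftSp K σ nn aa β k hβ M i
  have e5 : finrank K ↥U' = nn i := finrank_liftSp K σ nn aa β k hβ M' i
  rw [hinf0, finrank_bot] at e2
  rw [hsup] at e1
  rw [hsup]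
  omega

end Geom
section Bounds
open Module LinearMap Submodule Set

variable (K : Type) [Field K] {F : Type} [Field F] [Algebra K F] [Finite F]
variable (σ : F ≃+* F)
variable (hfix : ∀ x : F, σ x = x ↔ x ∈ Set.range (algebraMap K F))
variable {ℓ : ℕ} (nn : Fin ℓ → ℕ) (aa : Fin ℓ → F)
variable (β : (Σ i : Fin ℓ, Fin (nn i)) → F) {s : ℕ} (k : ℕ)

lemma Fop_beta (e : Fin k → F) (i : Fin ℓ) (μ : Fin (nn i)) :
    Fop K σ hfix (fun t => if h : t < k then e ⟨t, h⟩ else 0) k (aa i) (β ⟨i, μ⟩)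
      = ∑ t : Fin k, e t * opev σ (aa i) (β ⟨i, μ⟩) (t : ℕ) := by
  rw [Fop_apply,
    ← Fin.sum_univ_eq_sum_range
      (fun j => (if h : j < k then e ⟨j, h⟩ else 0) * opev σ (aa i) (β ⟨i, μ⟩) j) k]
  apply Finset.sum_congr rfl
  intro t _
  simp [t.isLt]

lemma erow_ne_zero {e : Fin k → F} (he : e ≠ 0) :
    (fun t => if h : t < k then e ⟨t, h⟩ else 0) ≠ (0 : ℕ → F) := by
  obtain ⟨t, ht⟩ := Function.ne_iff.1 he
  intro h
  apply ht
  have := congrFun h (t : ℕ)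
  simpa [t.isLt] using this

lemma erow_vanish (e : Fin k → F) :
    ∀ t, k ≤ t → (fun t => if h : t < k then e ⟨t, h⟩ else 0) t = (0 : F) :=
  fun t ht => dif_neg (by omega)

lemma map_V_eq (e : Fin k → F) (i : Fin ℓ) :
    Submodule.map (Fop K σ hfix (fun t => if h : t < k then e ⟨t, h⟩ else 0) k (aa i))
        (span K (Set.range fun μ : Fin (nn i) => β ⟨i, μ⟩))
      = span K (Set.range fun μ : Fin (nn i) =>
          ∑ t : Fin k, e t * opev σ (aa i) (β ⟨i, μ⟩) (t : ℕ)) := by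
  rw [Submodule.map_span, ← Set.range_comp]
  have h : (⇑(Fop K σ hfix (fun t => if h : t < k then e ⟨t, h⟩ else 0) k (aa i))
      ∘ fun μ : Fin (nn i) => β ⟨i, μ⟩)
      = fun μ : Fin (nn i) => ∑ t : Fin k, e t * opev σ (aa i) (β ⟨i, μ⟩) (t : ℕ) :=
    funext fun μ => Fop_beta K σ hfix nn aa β k e i μ
  rw [h]

include hfix in
lemma sum_rho_lower (hβ : ∀ i, LinearIndependent K fun μ : Fin (nn i) => β ⟨i, μ⟩)
    (ha0 : ∀ i, aa i ≠ 0)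
    (haconj : ∀ i j : Fin ℓ, i ≠ j → ¬ SConj σ (aa i) (aa j))
    {n : ℕ} (hn : n = ∑ i, nn i) (hk : 1 ≤ k) (hkn : k ≤ n)
    (E : Matrix (Fin s) (Fin k) F) (hE : E ≠ 0) :
    n - k + 1 ≤ ∑ i, rho K σ nn aa β k E i := by
  obtain ⟨j₀, hj₀⟩ := Function.ne_iff.1 hE
  have hj₀' : E j₀ ≠ 0 := fun h => hj₀ (h.trans rfl)
  set erow : ℕ → F := fun t => if h : t < k then E j₀ ⟨t, h⟩ else 0 with herow
  have hvan := erow_vanish k (E j₀)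
  have hne := erow_ne_zero k hj₀'
  have hLL := lam_leroy σ hfix aa ha0 haconj k erow hvan hne
  have hper : ∀ i, nn i ≤ rho K σ nn aa β k E i
      + finrank K ↥(LinearMap.ker (Fop K σ hfix erow k (aa i))) := by
    intro i
    have h1 := finrank_map_add_finrank_inf_ker (Fop K σ hfix erow k (aa i))
      (span K (Set.range fun μ : Fin (nn i) => β ⟨i, μ⟩))
    rw [map_V_eq K σ hfix nn aa β k (E j₀) i] at h1
    have h2 : finrank K ↥(span K (Set.range fun μ : Fin (nn i) => β ⟨i, μ⟩)) = nn i := by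
      rw [finrank_span_eq_card (hβ i)]; simp
    have h3 : finrank K ↥(LinearMap.ker (Fop K σ hfix erow k (aa i))
          ⊓ span K (Set.range fun μ : Fin (nn i) => β ⟨i, μ⟩))
        ≤ finrank K ↥(LinearMap.ker (Fop K σ hfix erow k (aa i))) :=
      Submodule.finrank_mono inf_le_left
    have h4 : finrank K ↥(span K (Set.range fun μ : Fin (nn i) =>
          ∑ t : Fin k, E j₀ t * opev σ (aa i) (β ⟨i, μ⟩) (t : ℕ)))
        ≤ rho K σ nn aa β k E i := by
      have h5 : span K (Set.range fun μ : Fin (nn i) =>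
            ∑ t : Fin k, E j₀ t * opev σ (aa i) (β ⟨i, μ⟩) (t : ℕ))
          = Submodule.map (LinearMap.proj (R := K) (φ := fun _ : Fin s => F) j₀)
              (span K (Set.range (colv σ nn aa β k E i))) := by
        rw [Submodule.map_span, ← Set.range_comp]
        have h6 : (⇑(LinearMap.proj (R := K) (φ := fun _ : Fin s => F) j₀)
            ∘ colv σ nn aa β k E i)
            = fun μ : Fin (nn i) =>
                ∑ t : Fin k, E j₀ t * opev σ (aa i) (β ⟨i, μ⟩) (t : ℕ) := by
          funext μ
          rw [show ((LinearMap.proj (R := K) (φ := fun _ : Fin s => F) j₀)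
              ∘ colv σ nn aa β k E i) μ = codeword σ nn aa β k E j₀ ⟨i, μ⟩ from rfl]
          rw [codeword_apply]
        rw [h6]
      rw [h5, rho]
      exact Submodule.finrank_map_le _ _
    omega
  have hs1 : n ≤ (∑ i, rho K σ nn aa β k E i)
      + ∑ i, finrank K ↥(LinearMap.ker (Fop K σ hfix erow k (aa i))) := by
    rw [hn, ← Finset.sum_add_distrib]
    exact Finset.sum_le_sum fun i _ => hper i
  omega

end Bounds
section Achieve
open Module LinearMap Submodule Set

variable (K : Type) [Field K] {F : Type} [Field F] [Algebra K F] [Finite F]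
variable (σ : F ≃+* F)
variable (hfix : ∀ x : F, σ x = x ↔ x ∈ Set.range (algebraMap K F))
variable {ℓ : ℕ} (nn : Fin ℓ → ℕ) (aa : Fin ℓ → F)
variable (β : (Σ i : Fin ℓ, Fin (nn i)) → F) {s : ℕ} (k : ℕ)

/-- There is a nonzero coefficient vector whose skew polynomial kills `k-1`
prescribed evaluation points. -/
lemma exists_coeffs {n : ℕ} (hn : n = ∑ i, nn i) (hk : 1 ≤ k) (hkn : k ≤ n) :
    ∃ (S : Finset (Σ i : Fin ℓ, Fin (nn i))) (e : Fin k → F), S.card = k - 1 ∧ e ≠ 0 ∧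
      ∀ p : Σ i : Fin ℓ, Fin (nn i), p ∈ S →
        ∑ t : Fin k, e t * opev σ (aa p.1) (β p) (t : ℕ) = 0 := by
  have hcard : Fintype.card (Σ i : Fin ℓ, Fin (nn i)) = n := by
    simp [Fintype.card_sigma, hn]
  obtain ⟨S, -, hS⟩ := Finset.exists_subset_card_eq
    (s := (Finset.univ : Finset (Σ i : Fin ℓ, Fin (nn i)))) (n := k - 1)
    (by rw [Finset.card_univ, hcard]; omega)
  let Φ : (Fin k → F) →ₗ[F] (↥S → F) :=
    { toFun := fun e => fun p =>
        ∑ t : Fin k, e t * opev σ (aa (p : Σ i : Fin ℓ, Fin (nn i)).1) (β p) (t : ℕ)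
      map_add' := fun x y => by
        funext p
        simp [add_mul, Finset.sum_add_distrib]
      map_smul' := fun c x => by
        funext p
        simp [Finset.mul_sum, mul_assoc] }
  have hker : LinearMap.ker Φ ≠ ⊥ := by
    intro h
    have hinj := LinearMap.ker_eq_bot.1 h
    have hle := LinearMap.finrank_le_finrank_of_injective hinj
    rw [Module.finrank_pi, Module.finrank_pi, Fintype.card_fin, Fintype.card_coe, hS] at hle
    omega
  obtain ⟨e, hemem, hene⟩ := (Submodule.ne_bot_iff _).1 hker
  refine ⟨S, e, hS, hene, ?_⟩
  intro p hp
  exact congrFun (LinearMap.mem_ker.1 hemem) ⟨p, hp⟩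

include hfix in
lemma exists_min (hβ : ∀ i, LinearIndependent K fun μ : Fin (nn i) => β ⟨i, μ⟩)
    (ha0 : ∀ i, aa i ≠ 0)
    (haconj : ∀ i j : Fin ℓ, i ≠ j → ¬ SConj σ (aa i) (aa j))
    (hs : 1 ≤ s) {n : ℕ} (hn : n = ∑ i, nn i) (hk : 1 ≤ k) (hkn : k ≤ n) :
    ∃ M : Matrix (Fin s) (Fin k) F, M ≠ 0 ∧
      ∑ i, rho K σ nn aa β k M i = n - k + 1 := by
  obtain ⟨S, e, hS, hene, heS⟩ := exists_coeffs σ nn aa β k hn hk hkn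
  set r0 : Fin s := ⟨0, hs⟩ with hr0
  set M : Matrix (Fin s) (Fin k) F := fun r t => if r = r0 then e t else 0 with hM
  have hM0 : M ≠ 0 := by
    obtain ⟨t, ht⟩ := Function.ne_iff.1 hene
    intro h
    apply ht
    have := congrFun (congrFun h r0) t
    simpa [hM] using this
  set erow : ℕ → F := fun t => if h : t < k then e ⟨t, h⟩ else 0 with herow
  have hvan := erow_vanish k e
  have hne := erow_ne_zero k hene
  set φ : Fin ℓ → (F →ₗ[K] F) := fun i => Fop K σ hfix erow k (aa i) with hφ
  set V : Fin ℓ → Submodule K F :=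
    fun i => span K (Set.range fun μ : Fin (nn i) => β ⟨i, μ⟩) with hV
  -- codeword entries
  have hcw : ∀ (r : Fin s) (p : Σ i : Fin ℓ, Fin (nn i)),
      codeword σ nn aa β k M r p
        = if r = r0 then ∑ t : Fin k, e t * opev σ (aa p.1) (β p) (t : ℕ) else 0 := by
    intro r p
    rw [codeword_apply]
    by_cases h : r = r0
    · simp [hM, h]
    · simp [hM, h]
  -- the embedding of F into row r0 of F^s
  let ι : F →ₗ[K] (Fin s → F) :=
    { toFun := fun x r => if r = r0 then x else 0
      map_add' := fun x y => by funext r; by_cases h : r = r0 <;> simp [h]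
      map_smul' := fun c x => by funext r; by_cases h : r = r0 <;> simp [h] }
  have hι_inj : Function.Injective ι := by
    intro x y h
    have := congrFun h r0
    simpa [ι] using this
  have hrho : ∀ i, rho K σ nn aa β k M i = finrank K ↥(Submodule.map (φ i) (V i)) := by
    intro i
    have hcolv : colv σ nn aa β k M i
        = ⇑ι ∘ fun μ : Fin (nn i) =>
            ∑ t : Fin k, e t * opev σ (aa i) (β ⟨i, μ⟩) (t : ℕ) := by
      funext μ
      funext r
      rw [show colv σ nn aa β k M i μ r = codeword σ nn aa β k M r ⟨i, μ⟩ from rfl, hcw]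
      rfl
    have h7 := (Submodule.equivMapOfInjective ι hι_inj
      (span K (Set.range fun μ : Fin (nn i) =>
        ∑ t : Fin k, e t * opev σ (aa i) (β ⟨i, μ⟩) (t : ℕ)))).finrank_eq
    rw [rho, hcolv, Set.range_comp, ← Submodule.map_span, ← h7]
    rw [show φ i = Fop K σ hfix (fun t => if h : t < k then e ⟨t, h⟩ else 0) k (aa i) from rfl,
      show V i = span K (Set.range fun μ : Fin (nn i) => β ⟨i, μ⟩) from rfl,
      map_V_eq K σ hfix nn aa β k e i]
  have hrd : ∀ i, rho K σ nn aa β k M i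
      + finrank K ↥(LinearMap.ker (φ i) ⊓ V i) = nn i := by
    intro i
    rw [hrho i]
    rw [finrank_map_add_finrank_inf_ker (φ i) (V i)]
    rw [hV]
    rw [finrank_span_eq_card (hβ i)]
    simp
  have hLL := lam_leroy σ hfix aa ha0 haconj k erow hvan hne
  have hdle : ∑ i, finrank K ↥(LinearMap.ker (φ i) ⊓ V i) ≤ k - 1 := by
    calc ∑ i, finrank K ↥(LinearMap.ker (φ i) ⊓ V i)
        ≤ ∑ i, finrank K ↥(LinearMap.ker (φ i)) :=
          Finset.sum_le_sum fun i _ => Submodule.finrank_mono inf_le_left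
      _ ≤ k - 1 := hLL
  have hdge : k - 1 ≤ ∑ i, finrank K ↥(LinearMap.ker (φ i) ⊓ V i) := by
    have hfiber : ∀ i, Fintype.card {μ : Fin (nn i) // (⟨i, μ⟩ : Σ i, Fin (nn i)) ∈ S}
        ≤ finrank K ↥(LinearMap.ker (φ i) ⊓ V i) := by
      intro i
      have hli : LinearIndependent K
          (fun μ : {μ : Fin (nn i) // (⟨i, μ⟩ : Σ i, Fin (nn i)) ∈ S} => β ⟨i, μ.1⟩) :=
        (hβ i).comp Subtype.val Subtype.val_injective
      have hsub : span K (Set.range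
            (fun μ : {μ : Fin (nn i) // (⟨i, μ⟩ : Σ i, Fin (nn i)) ∈ S} => β ⟨i, μ.1⟩))
          ≤ LinearMap.ker (φ i) ⊓ V i := by
        rw [span_le]
        rintro _ ⟨μ, rfl⟩
        refine Submodule.mem_inf.2 ⟨?_, subset_span ⟨μ.1, rfl⟩⟩
        rw [LinearMap.mem_ker, hφ]
        rw [Fop_beta K σ hfix nn aa β k e i μ.1]
        exact heS ⟨i, μ.1⟩ μ.2
      calc Fintype.card {μ : Fin (nn i) // (⟨i, μ⟩ : Σ i, Fin (nn i)) ∈ S}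
          = finrank K ↥(span K (Set.range
              (fun μ : {μ : Fin (nn i) // (⟨i, μ⟩ : Σ i, Fin (nn i)) ∈ S} => β ⟨i, μ.1⟩))) :=
            (finrank_span_eq_card hli).symm
        _ ≤ finrank K ↥(LinearMap.ker (φ i) ⊓ V i) := Submodule.finrank_mono hsub
    have hcards : ∑ i, Fintype.card {μ : Fin (nn i) // (⟨i, μ⟩ : Σ i, Fin (nn i)) ∈ S}
        = k - 1 := by
      rw [← hS, ← Fintype.card_coe]
      rw [← Fintype.card_sigma]
      apply Fintype.card_congr
      exact { toFun := fun x => ⟨⟨x.1, x.2.1⟩, x.2.2⟩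
              invFun := fun p => ⟨p.1.1, ⟨p.1.2, p.2⟩⟩
              left_inv := fun x => rfl
              right_inv := fun p => rfl }
    rw [← hcards]
    exact Finset.sum_le_sum fun i _ => hfiber i
  have hsum : (∑ i, rho K σ nn aa β k M i)
      + ∑ i, finrank K ↥(LinearMap.ker (φ i) ⊓ V i) = n := by
    rw [hn, ← Finset.sum_add_distrib]
    exact Finset.sum_congr rfl fun i _ => hrd i
  exact ⟨M, hM0, by omega⟩

end Achieve

/-- Minimum sum-subspace distance of lifted ILRS codes.
The minimum of `Σ_i d_S(U^(i)(M), U^(i)(M'))` over all pairs of distinct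
`M, M' ∈ F^{s×k}` is exactly `2(n − k + 1)`. -/
theorem LILRS_minimum_sum_subspace_distance
    {K F : Type} [Field K] [Field F] [Algebra K F] [Fintype K] [Fintype F]
    (σ : F ≃+* F)
    (hfix : ∀ x : F, σ x = x ↔ x ∈ Set.range (algebraMap K F))
    {ℓ : ℕ} (hℓ : 1 ≤ ℓ) (nn : Fin ℓ → ℕ) (aa : Fin ℓ → F)
    (ha0 : ∀ i, aa i ≠ 0)
    (haconj : ∀ i j : Fin ℓ, i ≠ j → ¬ SConj σ (aa i) (aa j))
    (β : (Σ i : Fin ℓ, Fin (nn i)) → F)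
    (hβ : ∀ i, LinearIndependent K fun μ : Fin (nn i) => β ⟨i, μ⟩)
    {s : ℕ} (hs : 1 ≤ s) {k n : ℕ} (hn : n = ∑ i, nn i)
    (hk : 1 ≤ k) (hkn : k ≤ n) :
    (∀ M M' : Matrix (Fin s) (Fin k) F, M ≠ M' →
        2 * (n - k + 1) ≤
          ∑ i, (Module.finrank K ↥(liftSp K σ nn aa β k M i ⊔ liftSp K σ nn aa β k M' i)
            - Module.finrank K ↥(liftSp K σ nn aa β k M i ⊓ liftSp K σ nn aa β k M' i))) ∧
      ∃ M M' : Matrix (Fin s) (Fin k) F, M ≠ M' ∧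
        ∑ i, (Module.finrank K ↥(liftSp K σ nn aa β k M i ⊔ liftSp K σ nn aa β k M' i)
            - Module.finrank K ↥(liftSp K σ nn aa β k M i ⊓ liftSp K σ nn aa β k M' i))
          = 2 * (n - k + 1) := by
  constructor
  · intro M M' hMM'
    have hlow := sum_rho_lower K σ hfix nn aa β k hβ ha0 haconj hn hk hkn (M - M')
      (sub_ne_zero.2 hMM')
    have hsum : ∑ i, (Module.finrank K ↥(liftSp K σ nn aa β k M i ⊔ liftSp K σ nn aa β k M' i)
          - Module.finrank K ↥(liftSp K σ nn aa β k M i ⊓ liftSp K σ nn aa β k M' i))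
        = 2 * ∑ i, rho K σ nn aa β k (M - M') i := by
      rw [Finset.mul_sum]
      exact Finset.sum_congr rfl fun i _ => block_dist K σ nn aa β k hβ M M' i
    rw [hsum]
    omega
  · obtain ⟨M, hM0, hsum⟩ := exists_min K σ hfix nn aa β k hβ ha0 haconj hs hn hk hkn
    refine ⟨M, 0, hM0, ?_⟩
    have h2 : ∑ i, (Module.finrank K ↥(liftSp K σ nn aa β k M i ⊔ liftSp K σ nn aa β k 0 i)
          - Module.finrank K ↥(liftSp K σ nn aa β k M i ⊓ liftSp K σ nn aa β k 0 i))
        = 2 * ∑ i, rho K σ nn aa β k (M - 0) i := by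
      rw [Finset.mul_sum]
      exact Finset.sum_congr rfl fun i _ => block_dist K σ nn aa β k hβ M 0 i
    rw [h2, sub_zero, hsum]

end Stmt16
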